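/- Let (X,d) be a finite nonempty ultrametric space and let Δ(X,d) denote the number of open balls of (X,d) that are not centered spheres of (X,d). Then every UGVL-extension (Y,ρ) of (X,d) satisfies card Y ≥ Δ(X,d) + card X. -/

import Mathlib

/-- `d` is an ultrametric on `X`: a nonnegative, symmetric function vanishing
exactly on the diagonal and satisfying the strong triangle inequality. -/
def IsUltrametricOn {X : Type*} (d : X → X → ℝ) : Prop :=
  (∀ x y, 0 ≤ d x y) ∧ (∀ x y, d x y = d y x) ∧
  (∀ x y, d x y = 0 ↔ x = y) ∧
  (∀ x y z, d x y ≤ max (d x z) (d z y))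

/-- `B` is an open ball of the space `(X, d)`. -/
def IsOpenBallOf {X : Type*} (d : X → X → ℝ) (B : Set X) : Prop :=
  ∃ c : X, ∃ r : ℝ, 0 < r ∧ B = {x | d c x < r}

/-- `C` is a centered sphere of the space `(X, d)`. -/
def IsCenteredSphereOf {X : Type*} (d : X → X → ℝ) (C : Set X) : Prop :=
  ∃ c ∈ C, ∃ r : ℝ, 0 ≤ r ∧ C = {x | d x c = r} ∪ {c}

/-- The diameter `sup {d x y : x, y ∈ A}` of a subset `A` of `(X, d)`. -/
noncomputable def setDiam {X : Type*} (d : X → X → ℝ) (A : Set X) : ℝ :=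
  sSup {r | ∃ x ∈ A, ∃ y ∈ A, r = d x y}

/-- A space is locally finite if all of its open balls are finite sets. -/
def IsLocallyFiniteOn {X : Type*} (d : X → X → ℝ) : Prop :=
  ∀ B : Set X, IsOpenBallOf d B → B.Finite

/-- The maximum of the (nonnegative) labels of the vertices of a walk `p`. -/
def walkMax {X : Type*} {T : SimpleGraph X} (l : X → ℝ) {u v : X} (p : T.Walk u v) : ℝ :=
  (p.support.map l).foldr max 0

/-- The function `d` is generated by the tree `T` with nonnegative vertex labeling `l`,
i.e. `d u u = 0` and, for `u ≠ v`, `d u v` is the maximum of the labels of the vertices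
on the (unique) path joining `u` and `v` in `T`. -/
def GeneratedBy {X : Type*} (d : X → X → ℝ) (T : SimpleGraph X) (l : X → ℝ) : Prop :=
  T.IsTree ∧ (∀ x, 0 ≤ l x) ∧ (∀ u, d u u = 0) ∧
  ∀ u v : X, u ≠ v → ∀ p : T.Walk u v, p.IsPath → d u v = walkMax l p

/-- `(X, d)` belongs to the class UGVL: it is generated by some labeled tree. -/
def IsUGVL {X : Type*} (d : X → X → ℝ) : Prop :=
  ∃ (T : SimpleGraph X) (l : X → ℝ), GeneratedBy d T l

/- ---------------- Auxiliary lemmas ---------------- -/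

lemma foldr_max_nonneg (L : List ℝ) : 0 ≤ L.foldr max 0 := by
  induction L with
  | nil => simp
  | cons a t ih => simpa using Or.inr ih

lemma le_foldr_max {L : List ℝ} {a : ℝ} (h : a ∈ L) : a ≤ L.foldr max 0 := by
  induction L with
  | nil => simp at h
  | cons b t ih =>
    rcases List.mem_cons.mp h with rfl | h
    · simp [List.foldr_cons, le_max_left]
    · exact le_trans (ih h) (by simp [List.foldr_cons, le_max_right])

lemma foldr_max_le {L : List ℝ} {M : ℝ} (h0 : 0 ≤ M) (h : ∀ a ∈ L, a ≤ M) :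
    L.foldr max 0 ≤ M := by
  induction L with
  | nil => simpa
  | cons b t ih =>
    simp only [List.foldr_cons, max_le_iff]
    exact ⟨h b (by simp), ih fun a ha => h a (by simp [ha])⟩

lemma walkMax_nonneg {Y : Type*} {T : SimpleGraph Y} (l : Y → ℝ) {u v : Y}
    (p : T.Walk u v) : 0 ≤ walkMax l p := foldr_max_nonneg _

lemma le_walkMax {Y : Type*} {T : SimpleGraph Y} (l : Y → ℝ) {u v w : Y}
    (p : T.Walk u v) (hw : w ∈ p.support) : l w ≤ walkMax l p :=
  le_foldr_max (List.mem_map_of_mem (f := l) hw)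

lemma walkMax_le {Y : Type*} {T : SimpleGraph Y} (l : Y → ℝ) {u v : Y}
    (p : T.Walk u v) {M : ℝ} (h0 : 0 ≤ M) (h : ∀ w ∈ p.support, l w ≤ M) :
    walkMax l p ≤ M := by
  apply foldr_max_le h0
  intro a ha
  rcases List.mem_map.mp ha with ⟨w, hw, rfl⟩
  exact h w hw

/-- In a locally finite UGVL space, every open ball is a centered sphere. -/
lemma ugvl_ball_centered {Y : Type*} [Finite Y] {ρ : Y → Y → ℝ}
    (hρ : IsUltrametricOn ρ) (hY : IsUGVL ρ) {B : Set Y} (hB : IsOpenBallOf ρ B) :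
    IsCenteredSphereOf ρ B := by
  classical
  obtain ⟨T, l, hT, hl, hdiag, hpath⟩ := hY
  obtain ⟨c, r, hr, rfl⟩ := hB
  -- existence of paths
  have hpe : ∀ u v : Y, ∃ p : T.Walk u v, p.IsPath := by
    intro u v
    obtain ⟨w⟩ := hT.isConnected.preconnected u v
    exact ⟨w.bypass, w.bypass_isPath⟩
  -- distance is walkMax of any path between distinct points
  have hdw : ∀ u v : Y, u ≠ v → ∀ p : T.Walk u v, p.IsPath → ρ u v = walkMax l p :=
    hpath
  -- labels bounded by distances
  have hL1 : ∀ u v : Y, u ≠ v → l u ≤ ρ u v ∧ l v ≤ ρ u v := by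
    intro u v huv
    obtain ⟨p, hp⟩ := hpe u v
    rw [hdw u v huv p hp]
    exact ⟨le_walkMax l p p.start_mem_support, le_walkMax l p p.end_mem_support⟩
  -- vertices of a path from the center stay in the ball
  have hball : ∀ (x : Y), ρ c x < r → ∀ (p : T.Walk c x), p.IsPath →
      ∀ w ∈ p.support, ρ c w < r := by
    intro x hx p hp w hw
    by_cases hwc : w = c
    · rw [hwc, hdiag]; exact hr
    · by_cases hxc : x = c
      · exfalso
        subst hxc
        have hnil : p = SimpleGraph.Walk.nil := SimpleGraph.Walk.isPath_iff_eq_nil.mp hp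
        rw [hnil] at hw
        simp only [SimpleGraph.Walk.support_nil, List.mem_singleton] at hw
        exact hwc hw
      · have hq : (p.takeUntil w hw).IsPath := hp.takeUntil hw
        have h1 : ρ c w = walkMax l (p.takeUntil w hw) :=
          hdw c w (fun h => hwc h.symm) _ hq
        have h2 : walkMax l (p.takeUntil w hw) ≤ walkMax l p := by
          apply walkMax_le _ _ (walkMax_nonneg l p)
          intro w' hw'
          exact le_walkMax l p (p.support_takeUntil_subset hw hw')
        have h3 : walkMax l p = ρ c x := (hdw c x (fun h => hxc h.symm) p hp).symm
        calc ρ c w = walkMax l (p.takeUntil w hw) := h1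
          _ ≤ walkMax l p := h2
          _ = ρ c x := h3
          _ < r := hx
  have hcc : ρ c c = 0 := hdiag c
  have hcB : c ∈ {x | ρ c x < r} := by simpa [hcc] using hr
  -- choose a point of maximal label in the ball
  obtain ⟨p₀, hp₀B, hp₀max⟩ :=
    Set.exists_max_image {x | ρ c x < r} l (Set.toFinite _) ⟨c, hcB⟩
  by_cases hex : ∃ x ∈ {x | ρ c x < r}, x ≠ p₀
  · -- the ball has at least two points
    obtain ⟨x₀, hx₀, hx₀ne⟩ := hex
    have hm0 : 0 ≤ l p₀ := hl p₀
    have hmr : l p₀ < r := by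
      by_cases hpc : p₀ = c
      · subst hpc
        calc l p₀ ≤ ρ p₀ x₀ := (hL1 p₀ x₀ (Ne.symm hx₀ne)).1
          _ < r := hx₀
      · calc l p₀ ≤ ρ c p₀ := (hL1 c p₀ (fun h => hpc h.symm)).2
          _ < r := hp₀B
    refine ⟨p₀, hp₀B, l p₀, hm0, ?_⟩
    ext y
    simp only [Set.mem_setOf_eq, Set.mem_union, Set.mem_singleton_iff]
    constructor
    · intro hy
      by_cases hyp : y = p₀
      · exact Or.inr hyp
      · left
        -- build a path from y to p₀ through c
        obtain ⟨q₁, hq₁⟩ := hpe c y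
        obtain ⟨q₂, hq₂⟩ := hpe c p₀
        set w : T.Walk y p₀ := (q₁.reverse.append q₂).bypass with hwdef
        have hwpath : w.IsPath := (q₁.reverse.append q₂).bypass_isPath
        have hsup : ∀ v ∈ w.support, ρ c v < r := by
          intro v hv
          have hv' := (q₁.reverse.append q₂).support_bypass_subset hv
          rcases (SimpleGraph.Walk.mem_support_append_iff _ _).mp hv' with h | h
          · rw [SimpleGraph.Walk.support_reverse, List.mem_reverse] at h
            exact hball y hy q₁ hq₁ v h
          · exact hball p₀ hp₀B q₂ hq₂ v h
        have h1 : ρ y p₀ = walkMax l w := hdw y p₀ hyp w hwpath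
        have h2 : walkMax l w ≤ l p₀ := by
          apply walkMax_le _ _ hm0
          intro v hv
          exact hp₀max v (hsup v hv)
        have h3 : l p₀ ≤ walkMax l w := le_walkMax l w w.end_mem_support
        rw [h1]; exact le_antisymm h2 h3
    · intro hy
      rcases hy with hy | rfl
      · -- ρ y p₀ = l p₀ < r, so y is in the ball
        have : ρ c y ≤ max (ρ c p₀) (ρ p₀ y) := hρ.2.2.2 c y p₀
        have hpy : ρ p₀ y = l p₀ := by rw [hρ.2.1 p₀ y]; exact hy
        calc ρ c y ≤ max (ρ c p₀) (ρ p₀ y) := this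
          _ < r := max_lt hp₀B (by rw [hpy]; exact hmr)
      · exact hp₀B
  · -- the ball is the singleton {p₀}
    push_neg at hex
    refine ⟨p₀, hp₀B, 0, le_refl 0, ?_⟩
    ext y
    simp only [Set.mem_setOf_eq, Set.mem_union, Set.mem_singleton_iff]
    constructor
    · intro hy; exact Or.inr (hex y hy)
    · intro hy
      rcases hy with hy | rfl
      · have : y = p₀ := (hρ.2.2.1 y p₀).mp hy
        subst this; exact hp₀B
      · exact hp₀B

/-- Any UGVL-extension `(Y, ρ)` of a finite nonempty ultrametric space `(X, d)`
satisfies `card Y ≥ Δ(X, d) + card X`, where `Δ(X, d)` is the number of open balls of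
`(X, d)` that are not centered spheres. -/
theorem stmt_17 {X Y : Type*} [Finite X] (hne : Nonempty X)
    (d : X → X → ℝ) (hd : IsUltrametricOn d)
    (ρ : Y → Y → ℝ) (hρ : IsUltrametricOn ρ) (hY : IsUGVL ρ)
    (Φ : X → Y) (hΦ : ∀ x y : X, ρ (Φ x) (Φ y) = d x y) :
    (({B : Set X | IsOpenBallOf d B ∧ ¬ IsCenteredSphereOf d B}.ncard
        + Nat.card X : ℕ) : Cardinal) ≤ Cardinal.mk Y := by
  classical
  cases finite_or_infinite Y with
  | inr hinf =>
      exact le_trans (le_of_lt (Cardinal.nat_lt_aleph0 _)) (Cardinal.infinite_iff.mp hinf)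
  | inl hfin =>
  set S : Set (Set X) := {B : Set X | IsOpenBallOf d B ∧ ¬ IsCenteredSphereOf d B} with hS
  have hΦinj : Function.Injective Φ := by
    intro x y h
    have : ρ (Φ x) (Φ y) = 0 := by rw [h]; exact (hρ.2.2.1 _ _).mpr rfl
    rw [hΦ] at this
    exact (hd.2.2.1 x y).mp this
  -- choose witnesses for each bad ball
  have h1 : ∀ B : ↥S, ∃ c : X, ∃ r : ℝ, 0 < r ∧ (B : Set X) = {x | d c x < r} := fun B => B.2.1
  choose c r hrpos hBeq using h1
  -- the corresponding balls in Y
  have h2 : ∀ B : ↥S, IsCenteredSphereOf ρ {y | ρ (Φ (c B)) y < r B} :=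
    fun B => ugvl_ball_centered hρ hY ⟨Φ (c B), r B, hrpos B, rfl⟩
  choose p hpmem r' hr'nonneg hCeq using h2
  -- basic facts
  have hmemiff : ∀ (B : ↥S) (x : X), x ∈ (B : Set X) ↔ ρ (Φ (c B)) (Φ x) < r B := by
    intro B x
    rw [hΦ]
    constructor
    · intro h; rw [hBeq B] at h; exact h
    · intro h; rw [hBeq B]; exact h
  have hΦcmem : ∀ B : ↥S, Φ (c B) ∈ {y | ρ (Φ (c B)) y < r B} := by
    intro B
    simp only [Set.mem_setOf_eq]
    rw [(hρ.2.2.1 _ _).mpr rfl]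
    exact hrpos B
  -- p B is not in the range of Φ
  have hpnotin : ∀ B : ↥S, p B ∉ Set.range Φ := by
    intro B ⟨q, hq⟩
    apply B.2.2
    refine ⟨q, ?_, r' B, hr'nonneg B, ?_⟩
    · rw [hmemiff B q, hΦ, ← hΦ, hq]
      exact hpmem B
    · ext x
      have hx : x ∈ (B : Set X) ↔ Φ x ∈ {y | ρ (Φ (c B)) y < r B} := hmemiff B x
      rw [hCeq B] at hx
      simp only [Set.mem_union, Set.mem_setOf_eq, Set.mem_singleton_iff] at hx ⊢
      rw [hx]
      have hdq : ρ (Φ x) (p B) = d x q := by rw [← hq, hΦ]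
      constructor
      · rintro (h | h)
        · left; rw [hdq] at h; exact h
        · right; exact hΦinj (h.trans hq.symm)
      · rintro (h | rfl)
        · left; rw [hdq]; exact h
        · right; exact hq
  have hΦcnep : ∀ B : ↥S, Φ (c B) ≠ p B := by
    intro B h
    exact hpnotin B ⟨c B, h⟩
  have hrval : ∀ B : ↥S, ρ (Φ (c B)) (p B) = r' B := by
    intro B
    have := hΦcmem B
    rw [hCeq B] at this
    rcases this with h | h
    · exact h
    · exact absurd h (hΦcnep B)
  -- nested balls
  have hnest : ∀ B₁ B₂ : ↥S, p B₁ = p B₂ → r B₁ ≤ r B₂ →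
      {y | ρ (Φ (c B₁)) y < r B₁} ⊆ {y | ρ (Φ (c B₂)) y < r B₂} := by
    intro B₁ B₂ hpeq hrle y hy
    simp only [Set.mem_setOf_eq] at hy ⊢
    have h2 : ρ (p B₂) y < r B₂ := by
      rw [← hpeq]
      calc ρ (p B₁) y ≤ max (ρ (p B₁) (Φ (c B₁))) (ρ (Φ (c B₁)) y) := hρ.2.2.2 _ _ _
        _ < r B₂ := by
            apply max_lt _ (lt_of_lt_of_le hy hrle)
            rw [hρ.2.1]
            exact lt_of_lt_of_le (hpmem B₁) hrle
    calc ρ (Φ (c B₂)) y ≤ max (ρ (Φ (c B₂)) (p B₂)) (ρ (p B₂) y) := hρ.2.2.2 _ _ _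
      _ < r B₂ := max_lt (hpmem B₂) h2
  have hr'eq : ∀ B₁ B₂ : ↥S, p B₁ = p B₂ → r B₁ ≤ r B₂ → r' B₁ = r' B₂ := by
    intro B₁ B₂ hpeq hrle
    have h1 : Φ (c B₁) ∈ {y | ρ (Φ (c B₂)) y < r B₂} := hnest B₁ B₂ hpeq hrle (hΦcmem B₁)
    rw [hCeq B₂] at h1
    rcases h1 with h | h
    · rw [← hrval B₁, ← h, hpeq]
    · exact absurd h (hpeq ▸ hΦcnep B₁)
  -- injectivity of p
  have hpinj : Function.Injective p := by
    intro B₁ B₂ hpeq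
    have hballeq : {y | ρ (Φ (c B₁)) y < r B₁} = {y | ρ (Φ (c B₂)) y < r B₂} := by
      have hr' : r' B₁ = r' B₂ := by
        rcases le_total (r B₁) (r B₂) with h | h
        · exact hr'eq B₁ B₂ hpeq h
        · exact (hr'eq B₂ B₁ hpeq.symm h).symm
      rw [hCeq B₁, hCeq B₂, hpeq, hr']
    apply Subtype.ext
    ext x
    have hx := Set.ext_iff.mp hballeq (Φ x)
    simp only [Set.mem_setOf_eq] at hx
    rw [hmemiff B₁ x, hmemiff B₂ x]
    exact hx
  -- combine the injections
  have hSfin : Finite ↥S := Subtype.finite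
  let F : ↥S ⊕ X → Y := Sum.elim p Φ
  have hFinj : Function.Injective F := by
    rintro (a | a) (b | b) hab
    · rw [hpinj hab]
    · exact absurd ⟨b, hab.symm⟩ (hpnotin a)
    · exact absurd ⟨a, hab⟩ (hpnotin b)
    · rw [hΦinj hab]
  have hcard : Nat.card (↥S ⊕ X) ≤ Nat.card Y := Nat.card_le_card_of_injective F hFinj
  rw [Nat.card_sum, Nat.card_coe_set_eq] at hcard
  haveI := Fintype.ofFinite Y
  rw [Cardinal.mk_fintype]
  exact_mod_cast le_trans hcard (le_of_eq (Nat.card_eq_fintype_card))
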